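/- Let S = {x ∈ ℓ¹ : ∑_{k=0}^∞ x_k = 0}. Then (^⊥S)^⊥ = ℓ¹, i.e., the annihilator (in ℓ¹) of the pre-annihilator of S (in c₀) is the whole space, even though S is a proper closed subspace of ℓ¹. In particular S ⊊ (^⊥S)^⊥. -/

import Mathlib

-- key: ν annihilating S implies ν constant, and tendsto 0 implies ν = 0
lemma pair_tsum {f : ℕ → ℝ} {k : ℕ} (hk : k ≠ 0)
    (hf : ∀ j, j ≠ 0 → j ≠ k → f j = 0) : ∑' j, f j = f 0 + f k := by
  rw [tsum_eq_sum (s := {0, k}) (by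
    intro b hb
    simp only [Finset.mem_insert, Finset.mem_singleton, not_or] at hb
    exact hf b hb.1 hb.2)]
  rw [Finset.sum_pair (Ne.symm hk)]

lemma nu_zero (ν : lp (fun _ : ℕ => ℝ) ⊤)
    (h0 : Filter.Tendsto (fun k => ν k) Filter.atTop (nhds 0))
    (hann : ∀ s ∈ {s : lp (fun _ : ℕ => ℝ) 1 | ∑' k : ℕ, s k = 0},
      ∑' k : ℕ, ν k * s k = 0) : ∀ k, ν k = 0 := by
  have hconst : ∀ k, ν k = ν 0 := by
    intro k
    rcases eq_or_ne k 0 with rfl | hk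
    · rfl
    · set s : lp (fun _ : ℕ => ℝ) 1 := lp.single 1 0 (1:ℝ) - lp.single 1 k 1 with hs
      have hsj : ∀ j, j ≠ 0 → j ≠ k → s j = 0 := by
        intro j h1 h2
        simp [hs, lp.single_apply_ne _ _ _ h1, lp.single_apply_ne _ _ _ h2, Pi.single_apply, h1, h2]
      have hs0 : s 0 = 1 := by
        simp [hs, lp.single_apply_self, lp.single_apply_ne _ _ _ (Ne.symm hk), Pi.single_apply, Ne.symm hk]
      have hsk : s k = -1 := by
        simp [hs, lp.single_apply_self, lp.single_apply_ne _ _ _ hk, Pi.single_apply, hk]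
      have hmem : ∑' j : ℕ, s j = 0 := by
        rw [pair_tsum hk hsj, hs0, hsk]; ring
      have := hann s hmem
      rw [pair_tsum hk (fun j h1 h2 => by rw [hsj j h1 h2, mul_zero]), hs0, hsk] at this
      linarith
  have : Filter.Tendsto (fun _ : ℕ => ν 0) Filter.atTop (nhds 0) := by
    simpa only [hconst] using h0
  have h00 : ν 0 = 0 := tendsto_nhds_unique tendsto_const_nhds this
  intro k; rw [hconst k, h00]

/-- For `S = {x ∈ ℓ¹ : ∑ x_k = 0}`, the annihilator (in ℓ¹) of the
pre-annihilator of `S` (in c₀, under `⟨ν,x⟩ = ∑ ν_k x_k`) is all of ℓ¹;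
in particular `S` is strictly contained in it. -/
theorem ann_of_preann_of_sum_zero_subspace_eq_univ :
    {x : lp (fun _ : ℕ => ℝ) 1 |
        ∀ ν : lp (fun _ : ℕ => ℝ) ⊤,
          Filter.Tendsto (fun k => ν k) Filter.atTop (nhds 0) →
          (∀ s ∈ {s : lp (fun _ : ℕ => ℝ) 1 | ∑' k : ℕ, s k = 0}, ∑' k : ℕ, ν k * s k = 0) →
          ∑' k : ℕ, ν k * x k = 0}
      = Set.univ
    ∧ {x : lp (fun _ : ℕ => ℝ) 1 | ∑' k : ℕ, x k = 0}
        ⊂ {x : lp (fun _ : ℕ => ℝ) 1 |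
            ∀ ν : lp (fun _ : ℕ => ℝ) ⊤,
              Filter.Tendsto (fun k => ν k) Filter.atTop (nhds 0) →
              (∀ s ∈ {s : lp (fun _ : ℕ => ℝ) 1 | ∑' k : ℕ, s k = 0},
                ∑' k : ℕ, ν k * s k = 0) →
              ∑' k : ℕ, ν k * x k = 0} := by
  have huniv : {x : lp (fun _ : ℕ => ℝ) 1 |
        ∀ ν : lp (fun _ : ℕ => ℝ) ⊤,
          Filter.Tendsto (fun k => ν k) Filter.atTop (nhds 0) →
          (∀ s ∈ {s : lp (fun _ : ℕ => ℝ) 1 | ∑' k : ℕ, s k = 0}, ∑' k : ℕ, ν k * s k = 0) →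
          ∑' k : ℕ, ν k * x k = 0} = Set.univ := by
    ext x
    simp only [Set.mem_setOf_eq, Set.mem_univ, iff_true]
    intro ν h0 hann
    have := nu_zero ν h0 hann
    simp [this]
  refine ⟨huniv, ?_⟩
  rw [huniv]
  constructor
  · exact Set.subset_univ _
  · intro h
    have : (lp.single 1 0 (1:ℝ) : lp (fun _ : ℕ => ℝ) 1) ∈
        {x : lp (fun _ : ℕ => ℝ) 1 | ∑' k : ℕ, x k = 0} := h (Set.mem_univ _)
    simp only [Set.mem_setOf_eq] at this
    rw [tsum_eq_single 0 (fun j hj => lp.single_apply_ne _ _ _ hj)] at this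
    rw [lp.single_apply_self] at this
    exact one_ne_zero this
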